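/- The pair ((U, q̄), i), with U := Â/R, q̄ := q̂ + R, i(x) := x̂ + R, is the enveloping^{⟨4-th⟩} algebra of the Leibniz algebra L: i is a Leibniz algebra homomorphism into (U,q̄) equipped with the bracket ⟨a,b⟩_{4,k} = ab − ba + bq̄a − abq̄ + kaq̄b − kq̄ab, and for any invariant algebra (A,q) and Leibniz homomorphism f : L → Leib((A,q),⟨·,·⟩_{4,k}) there exists a unique invariant homomorphism f' with f = f' ∘ i. -/

import Mathlib

noncomputable section

/-- The free `K`-vector space on `X ⊕ {q̃}`. -/
abbrev FreeInvModule (K : Type*) [Field K] (X : Type*) : Type _ := (X ⊕ Unit) →₀ K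

/-- The generator `q̃` inside the tensor algebra `T(V)`. -/
def qTilde (K : Type*) [Field K] (X : Type*) : TensorAlgebra K (FreeInvModule K X) :=
  TensorAlgebra.ι K (Finsupp.single (Sum.inr ()) 1)

/-- The relations generating the ideal `I`: `q̃⊗q̃ = q̃` and `q̃⊗a⊗q̃ = q̃⊗a` for all `a`. -/
inductive InvRel (K : Type*) [Field K] (X : Type*) :
    TensorAlgebra K (FreeInvModule K X) → TensorAlgebra K (FreeInvModule K X) → Prop
  | idem : InvRel K X (qTilde K X * qTilde K X) (qTilde K X)
  | inv (a : TensorAlgebra K (FreeInvModule K X)) :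
      InvRel K X (qTilde K X * a * qTilde K X) (qTilde K X * a)

/-- The free invariant algebra `Â = T(V)/I`. -/
abbrev FreeInvAlg (K : Type*) [Field K] (X : Type*) : Type _ := RingQuot (InvRel K X)

/-- `q̂ = q̃ + I`. -/
def qHat (K : Type*) [Field K] (X : Type*) : FreeInvAlg K X :=
  RingQuot.mkAlgHom K (InvRel K X) (qTilde K X)

variable (K : Type*) [Field K]

/-- The linear embedding `L → Â` extending `î` on the basis `X = {x_j}`. -/
def lHat (J : Type*) (L : Type*) [AddCommGroup L] [Module K L] (b : Module.Basis J K L) :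
    L →ₗ[K] FreeInvAlg K J :=
  (RingQuot.mkAlgHom K (InvRel K J)).toLinearMap ∘ₗ
    (TensorAlgebra.ι K (M := FreeInvModule K J)) ∘ₗ
      (Finsupp.lmapDomain K K Sum.inl) ∘ₗ b.repr.toLinearMap


/-- The relations generating the ideal `R` for a right Leibniz algebra `(L, ⟨·,·⟩)`:
`⟨x,y⟩^ = x̂ŷ - ŷx̂ + ŷq̂x̂ - x̂ŷq̂ + k x̂q̂ŷ - k q̂ŷx̂` for all `x, y ∈ L`. -/
inductive LeibRel (J : Type*) (L : Type*) [AddCommGroup L] [Module K L]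
    (br : L →ₗ[K] L →ₗ[K] L) (b : Module.Basis J K L) (c : K) :
    FreeInvAlg K J → FreeInvAlg K J → Prop
  | rel (x y : L) : LeibRel J L br b c (lHat K J L b (br x y))
      (lHat K J L b x * lHat K J L b y - lHat K J L b y * lHat K J L b x
        + lHat K J L b y * qHat K J * lHat K J L b x
        - lHat K J L b x * lHat K J L b y * qHat K J
        + c • (lHat K J L b x * qHat K J * lHat K J L b y)
        - c • (qHat K J * lHat K J L b y * lHat K J L b x))

/-- The enveloping^⟨4-th⟩ algebra `U = Â/R` of a Leibniz algebra. -/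
abbrev EnvLeib (J : Type*) (L : Type*) [AddCommGroup L] [Module K L]
    (br : L →ₗ[K] L →ₗ[K] L) (b : Module.Basis J K L) (c : K) : Type _ :=
  RingQuot (LeibRel K J L br b c)

/-- `q̄ = q̂ + R`. -/
def qBarLeib (J : Type*) (L : Type*) [AddCommGroup L] [Module K L]
    (br : L →ₗ[K] L →ₗ[K] L) (b : Module.Basis J K L) (c : K) : EnvLeib K J L br b c :=
  RingQuot.mkAlgHom K (LeibRel K J L br b c) (qHat K J)

/-- The canonical linear map `i : L → U`, `i(x) = x̂ + R`. -/
def iLeib (J : Type*) (L : Type*) [AddCommGroup L] [Module K L]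
    (br : L →ₗ[K] L →ₗ[K] L) (b : Module.Basis J K L) (c : K) : L →ₗ[K] EnvLeib K J L br b c :=
  (RingQuot.mkAlgHom K (LeibRel K J L br b c)).toLinearMap ∘ₗ lHat K J L b

/-- `((U,q̄), i)` is the enveloping^⟨4-th⟩ algebra of the right Leibniz algebra `(L,⟨·,·⟩)`:
`i` is a Leibniz algebra homomorphism into `(U,q̄)` with the 4-th angle bracket, and for any
invariant algebra `(A,q)` and any Leibniz algebra homomorphism
`f : L → Leib((A,q), ⟨·,·⟩_{4,k})` there is a unique invariant homomorphism `f'` with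
`f = f' ∘ i`. -/
theorem envLeib_is_enveloping (J : Type*) (L : Type*) [AddCommGroup L] [Module K L]
    (br : L →ₗ[K] L →ₗ[K] L)
    (hleib : ∀ x y z : L, br (br x y) z = br x (br y z) + br (br x z) y)
    (b : Module.Basis J K L) (c : K) (hc : c ≠ 0) :
    -- (i) `i` is a Leibniz algebra homomorphism
    (∀ x y : L,
      iLeib K J L br b c (br x y) =
        iLeib K J L br b c x * iLeib K J L br b c y
          - iLeib K J L br b c y * iLeib K J L br b c x
          + iLeib K J L br b c y * qBarLeib K J L br b c * iLeib K J L br b c x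
          - iLeib K J L br b c x * iLeib K J L br b c y * qBarLeib K J L br b c
          + c • (iLeib K J L br b c x * qBarLeib K J L br b c * iLeib K J L br b c y)
          - c • (qBarLeib K J L br b c * iLeib K J L br b c y * iLeib K J L br b c x)) ∧
    -- (ii) the universal property
    (∀ (A : Type*) [Ring A] [Algebra K A] (q : A), q * q = q →
      ∀ f : L →ₗ[K] A, (∀ x : L, q * f x * q = q * f x) →
      (∀ x y : L,
        f (br x y) = f x * f y - f y * f x + f y * q * f x - f x * f y * q
          + c • (f x * q * f y) - c • (q * f y * f x)) →
      ∃! f' : EnvLeib K J L br b c →ₐ[K] A,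
        (f' (qBarLeib K J L br b c) = q) ∧ (∀ x : L, f' (iLeib K J L br b c x) = f x)) := by
  constructor
  · -- part (i)
    intro x y
    have h := RingQuot.mkAlgHom_rel K (LeibRel.rel (K := K) (b := b) (c := c) (br := br) x y)
    have hi : ∀ z : L, iLeib K J L br b c z =
        RingQuot.mkAlgHom K (LeibRel K J L br b c) (lHat K J L b z) := fun z => rfl
    rw [hi, h]
    simp only [map_add, map_sub, map_mul, map_smul, hi, qBarLeib]
  · -- part (ii)
    intro A _ _ q hq f hfq hf
    -- the linear map on the free module
    set gmap : FreeInvModule K J →ₗ[K] A :=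
      (Finsupp.lift A K (J ⊕ Unit)) (Sum.elim (fun j => f (b j)) (fun _ => q)) with hgmap
    have hgmap_inl : ∀ j : J, gmap (Finsupp.single (Sum.inl j) 1) = f (b j) := by
      intro j; simp [hgmap]
    have hgmap_inr : gmap (Finsupp.single (Sum.inr ()) 1) = q := by
      simp [hgmap]
    set φ : TensorAlgebra K (FreeInvModule K J) →ₐ[K] A := TensorAlgebra.lift K gmap with hφ
    have hφq : φ (qTilde K J) = q := by
      rw [hφ, qTilde, TensorAlgebra.lift_ι_apply, hgmap_inr]
    -- invariance of elements in the image of φ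
    have hmulS : ∀ a a' : A, q * a * q = q * a → q * a' * q = q * a' →
        q * (a * a') * q = q * (a * a') := by
      intro a a' ha ha'
      calc q * (a * a') * q
          = (q * a) * (a' * q) := by noncomm_ring
        _ = (q * a * q) * (a' * q) := by rw [ha]
        _ = (q * a) * (q * a' * q) := by noncomm_ring
        _ = (q * a) * (q * a') := by rw [ha']
        _ = (q * a * q) * a' := by noncomm_ring
        _ = (q * a) * a' := by rw [ha]
        _ = q * (a * a') := by noncomm_ring
    have hginv : ∀ v : FreeInvModule K J, q * gmap v * q = q * gmap v := by
      intro v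
      induction v using Finsupp.induction_linear with
      | zero => simp
      | add v w hv hw => rw [map_add, mul_add, add_mul, hv, hw]
      | single a s =>
        have h1 : q * gmap (Finsupp.single a 1) * q = q * gmap (Finsupp.single a 1) := by
          cases a with
          | inl j => rw [hgmap_inl]; exact hfq (b j)
          | inr u => cases u; rw [hgmap_inr, hq]; exact hq
        have h2 : (Finsupp.single a s : FreeInvModule K J) = s • Finsupp.single a 1 := by
          rw [Finsupp.smul_single, smul_eq_mul, mul_one]
        rw [h2, map_smul, mul_smul_comm, smul_mul_assoc, h1]
    have hφinv : ∀ t : TensorAlgebra K (FreeInvModule K J), q * φ t * q = q * φ t := by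
      intro t
      induction t using TensorAlgebra.induction with
      | algebraMap r =>
          rw [AlgHom.commutes, ← Algebra.commutes r q, mul_assoc, hq]
      | ι v => rw [hφ, TensorAlgebra.lift_ι_apply]; exact hginv v
      | mul s t hs ht => rw [map_mul]; exact hmulS _ _ hs ht
      | add s t hs ht => rw [map_add, mul_add, add_mul, hs, ht]
    have hrel1 : ∀ u v, InvRel K J u v → φ u = φ v := by
      rintro u v (_ | a)
      · simp only [map_mul, hφq]; exact hq
      · simp only [map_mul, hφq]; exact hφinv a
    set ψ1 : FreeInvAlg K J →ₐ[K] A := RingQuot.liftAlgHom K ⟨φ, hrel1⟩ with hψ1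
    have hψ1q : ψ1 (qHat K J) = q := by
      rw [hψ1, qHat, RingQuot.liftAlgHom_mkAlgHom_apply]; exact hφq
    have hψ1l : ∀ x : L, ψ1 (lHat K J L b x) = f x := by
      have h : (ψ1.toLinearMap ∘ₗ lHat K J L b) = f := by
        apply b.ext
        intro j
        simp only [LinearMap.comp_apply, AlgHom.toLinearMap_apply, lHat,
          Finsupp.lmapDomain_apply]
        rw [hψ1, RingQuot.liftAlgHom_mkAlgHom_apply, hφ, TensorAlgebra.lift_ι_apply]
        simp [hgmap_inl]
      intro x
      exact LinearMap.congr_fun h x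
    have hrel2 : ∀ u v, LeibRel K J L br b c u v → ψ1 u = ψ1 v := by
      rintro u v ⟨x, y⟩
      simp only [map_add, map_sub, map_mul, map_smul, hψ1l, hψ1q]
      exact hf x y
    set Ψ : EnvLeib K J L br b c →ₐ[K] A := RingQuot.liftAlgHom K ⟨ψ1, hrel2⟩ with hΨdef
    have hΨq : Ψ (qBarLeib K J L br b c) = q := by
      rw [hΨdef, qBarLeib, RingQuot.liftAlgHom_mkAlgHom_apply]; exact hψ1q
    have hΨi : ∀ x : L, Ψ (iLeib K J L br b c x) = f x := by
      intro x
      have h0 : iLeib K J L br b c x =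
          RingQuot.mkAlgHom K (LeibRel K J L br b c) (lHat K J L b x) := rfl
      rw [hΨdef, h0, RingQuot.liftAlgHom_mkAlgHom_apply]; exact hψ1l x
    refine ⟨Ψ, ⟨hΨq, hΨi⟩, ?_⟩
    rintro g ⟨hgq, hgi⟩
    apply RingQuot.ringQuot_ext'
    apply RingQuot.ringQuot_ext'
    apply TensorAlgebra.hom_ext
    apply Finsupp.lhom_ext
    intro a s
    have hs : (Finsupp.single a s : FreeInvModule K J) = s • Finsupp.single a 1 := by
      rw [Finsupp.smul_single, smul_eq_mul, mul_one]
    rw [hs, map_smul, map_smul]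
    congr 1
    simp only [LinearMap.comp_apply, AlgHom.toLinearMap_apply, AlgHom.comp_apply]
    cases a with
    | inl j =>
      have key : RingQuot.mkAlgHom K (LeibRel K J L br b c)
          (RingQuot.mkAlgHom K (InvRel K J)
            (TensorAlgebra.ι K (Finsupp.single (Sum.inl j) (1:K)))) =
          iLeib K J L br b c (b j) := by
        simp [iLeib, lHat]
      rw [key, hgi (b j), hΨi (b j)]
    | inr u =>
      cases u
      have key : RingQuot.mkAlgHom K (LeibRel K J L br b c)
          (RingQuot.mkAlgHom K (InvRel K J)
            (TensorAlgebra.ι K (Finsupp.single (Sum.inr ()) (1:K)))) =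
          qBarLeib K J L br b c := rfl
      rw [key, hgq, hΨq]
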